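/- For any m, n ≥ 3, the n × m grid graph G_{n,m} has a minimum connected dominating set that contains none of the four corner vertices (1,1), (1,m), (n,1), (n,m). -/

import Mathlib

open Finset

/-- The infinite grid graph on `ℤ × ℤ`: two points are adjacent iff their
Manhattan distance is `1`. -/
def GridZ : SimpleGraph (ℤ × ℤ) where
  Adj u v := |u.1 - v.1| + |u.2 - v.2| = 1
  symm := by
    constructor
    intro u v h
    beta_reduce at h ⊢
    rw [abs_sub_comm v.1 u.1, abs_sub_comm v.2 u.2]
    exact h
  loopless := by
    constructor
    intro u h
    simp at h

/-- The vertex set `[1,n] × [1,m]` of the `n × m` grid graph `G_{n,m}`. -/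
def box (n m : ℕ) : Set (ℤ × ℤ) :=
  {p | 1 ≤ p.1 ∧ p.1 ≤ (n : ℤ) ∧ 1 ≤ p.2 ∧ p.2 ≤ (m : ℤ)}

instance (n m : ℕ) (p : ℤ × ℤ) : Decidable (p ∈ box n m) :=
  inferInstanceAs (Decidable (1 ≤ p.1 ∧ p.1 ≤ (n : ℤ) ∧ 1 ≤ p.2 ∧ p.2 ≤ (m : ℤ)))

/-- `S` is a connected dominating set of the grid `G_{n,m}`:
`S ⊆ [1,n] × [1,m]`, the induced subgraph on `S` is connected, and every
vertex of the grid is in `S` or adjacent to a vertex of `S`. -/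
def IsCDS (n m : ℕ) (S : Finset (ℤ × ℤ)) : Prop :=
  (S : Set (ℤ × ℤ)) ⊆ box n m ∧
    (GridZ.induce (S : Set (ℤ × ℤ))).Connected ∧
    ∀ v ∈ box n m, ∃ u ∈ S, u = v ∨ GridZ.Adj u v

/-- The closed neighbourhood of a vertex in the (enlarged) grid. -/
def closedNbr (v : ℤ × ℤ) : Finset (ℤ × ℤ) :=
  {v, (v.1 + 1, v.2), (v.1 - 1, v.2), (v.1, v.2 + 1), (v.1, v.2 - 1)}

/-- The closed neighbourhood `N_{G'}[S]` of `S` in the enlarged grid `G'`. -/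
def closedN (S : Finset (ℤ × ℤ)) : Finset (ℤ × ℤ) :=
  S.biUnion closedNbr

/-- The loss function `ℓ(S) = Σ_{v ∈ N_{G'}[S]} (|N_{G'}[v] ∩ S| - 1)`. -/
def loss (S : Finset (ℤ × ℤ)) : ℕ :=
  ∑ v ∈ closedN S, ((closedNbr v ∩ S).card - 1)

/-- The boundary of `G_{n,m}`: vertices of the grid with degree at most 3. -/
def boundary (n m : ℕ) : Set (ℤ × ℤ) :=
  {p | p ∈ box n m ∧ (((closedNbr p).erase p).filter (· ∈ box n m)).card ≤ 3}

instance (n m : ℕ) (p : ℤ × ℤ) : Decidable (p ∈ boundary n m) :=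
  inferInstanceAs
    (Decidable (p ∈ box n m ∧ (((closedNbr p).erase p).filter (· ∈ box n m)).card ≤ 3))

/-- The excess `e(S)`: the number of points of `S` on the boundary of the grid. -/
def excess (n m : ℕ) (S : Finset (ℤ × ℤ)) : ℕ :=
  (S.filter (fun p => p ∈ boundary n m)).card

/-- The four corners of `G_{n,m}`. -/
def corners (n m : ℕ) : Set (ℤ × ℤ) :=
  {((1 : ℤ), (1 : ℤ)), ((1 : ℤ), (m : ℤ)), ((n : ℤ), (1 : ℤ)), ((n : ℤ), (m : ℤ))}

/-- The degree of a vertex `v` in the induced subgraph `G[S]`. -/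
def degS (S : Finset (ℤ × ℤ)) (v : ℤ × ℤ) : ℕ :=
  (((closedNbr v).erase v) ∩ S).card

/-- The number of leaves (degree-1 vertices) of `G[S]`. -/
def numLeaves (S : Finset (ℤ × ℤ)) : ℕ := (S.filter (fun v => degS S v = 1)).card

/-- The number of degree-3 vertices of `G[S]`. -/
def numDeg3 (S : Finset (ℤ × ℤ)) : ℕ := (S.filter (fun v => degS S v = 3)).card

/-- The number of degree-4 vertices of `G[S]`. -/
def numDeg4 (S : Finset (ℤ × ℤ)) : ℕ := (S.filter (fun v => degS S v = 4)).card

/-- A bend: a degree-2 vertex of `G[S]` having one vertical and one horizontal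
neighbour in `S`. -/
def IsBend (S : Finset (ℤ × ℤ)) (v : ℤ × ℤ) : Prop :=
  degS S v = 2 ∧ ((v.1 + 1, v.2) ∈ S ∨ (v.1 - 1, v.2) ∈ S) ∧
    ((v.1, v.2 + 1) ∈ S ∨ (v.1, v.2 - 1) ∈ S)

instance (S : Finset (ℤ × ℤ)) (v : ℤ × ℤ) : Decidable (IsBend S v) :=
  inferInstanceAs (Decidable (_ ∧ _ ∧ _))

/-- The number of bends of `G[S]`. -/
def numBends (S : Finset (ℤ × ℤ)) : ℕ := (S.filter (fun v => IsBend S v)).card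

/-- The connected domination number `γ_c(G_{n,m})`. -/
noncomputable def connDomNum (n m : ℕ) : ℕ :=
  sInf {k | ∃ S : Finset (ℤ × ℤ), IsCDS n m S ∧ S.card = k}

/-- A maximal horizontal line segment of `G[S]`: the vertices `(i,a),…,(i,b)`
all lie in `S`, and the segment cannot be extended in row `i`. -/
def IsMaxHSeg (S : Finset (ℤ × ℤ)) (i a b : ℤ) : Prop :=
  a ≤ b ∧ (∀ j, a ≤ j → j ≤ b → (i, j) ∈ S) ∧ (i, a - 1) ∉ S ∧ (i, b + 1) ∉ S

/-- A maximal vertical line segment of `G[S]`: the vertices `(a,j),…,(b,j)`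
all lie in `S`, and the segment cannot be extended in column `j`. -/
def IsMaxVSeg (S : Finset (ℤ × ℤ)) (j a b : ℤ) : Prop :=
  a ≤ b ∧ (∀ i, a ≤ i → i ≤ b → (i, j) ∈ S) ∧ (a - 1, j) ∉ S ∧ (b + 1, j) ∉ S

lemma gridZ_adj_iff {u v : ℤ × ℤ} : GridZ.Adj u v ↔ |u.1 - v.1| + |u.2 - v.2| = 1 :=
  Iff.rfl

lemma abs_pair {a b : ℤ} (h : |a| + |b| = 1) :
    (a = 1 ∧ b = 0) ∨ (a = -1 ∧ b = 0) ∨ (a = 0 ∧ b = 1) ∨ (a = 0 ∧ b = -1) := by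
  rcases abs_cases a with ⟨ha, _⟩ | ⟨ha, _⟩ <;> rcases abs_cases b with ⟨hb, _⟩ | ⟨hb, _⟩ <;>
    omega

lemma mkAdjH {u v : ℤ × ℤ} (h1 : u.1 - v.1 = 1 ∨ u.1 - v.1 = -1) (h2 : u.2 = v.2) :
    GridZ.Adj u v := by
  rw [gridZ_adj_iff]
  have : u.2 - v.2 = 0 := by omega
  rcases h1 with h1 | h1 <;> rw [h1, this] <;> norm_num

lemma mkAdjV {u v : ℤ × ℤ} (h1 : u.1 = v.1) (h2 : u.2 - v.2 = 1 ∨ u.2 - v.2 = -1) :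
    GridZ.Adj u v := by
  rw [gridZ_adj_iff]
  have : u.1 - v.1 = 0 := by omega
  rcases h2 with h2 | h2 <;> rw [h2, this] <;> norm_num

lemma adj_cases {c x : ℤ × ℤ} (h : GridZ.Adj c x) :
    (x.1 = c.1 + 1 ∧ x.2 = c.2) ∨ (x.1 = c.1 - 1 ∧ x.2 = c.2) ∨
    (x.1 = c.1 ∧ x.2 = c.2 + 1) ∨ (x.1 = c.1 ∧ x.2 = c.2 - 1) := by
  rcases abs_pair (gridZ_adj_iff.mp h) with ⟨h1, h2⟩ | ⟨h1, h2⟩ | ⟨h1, h2⟩ | ⟨h1, h2⟩ <;>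
    omega

lemma mem_box_iff {n m : ℕ} {p : ℤ × ℤ} :
    p ∈ box n m ↔ 1 ≤ p.1 ∧ p.1 ≤ (n : ℤ) ∧ 1 ≤ p.2 ∧ p.2 ≤ (m : ℤ) := Iff.rfl

lemma box_connected (n m : ℕ) (hn : 1 ≤ n) (hm : 1 ≤ m) :
    (GridZ.induce (box n m)).Connected := by
  have hn' : (1 : ℤ) ≤ n := by exact_mod_cast hn
  have hm' : (1 : ℤ) ≤ m := by exact_mod_cast hm
  have h11 : ((1 : ℤ), (1 : ℤ)) ∈ box n m := ⟨le_refl _, hn', le_refl _, hm'⟩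
  rw [SimpleGraph.connected_iff]
  refine ⟨?_, ⟨⟨(1, 1), h11⟩⟩⟩
  have key : ∀ k (p : ℤ × ℤ) (hp : p ∈ box n m), (p.1 + p.2).toNat ≤ k →
      (GridZ.induce (box n m)).Reachable ⟨p, hp⟩ ⟨(1, 1), h11⟩ := by
    intro k
    induction k with
    | zero =>
      intro p hp h
      obtain ⟨b1, b2, b3, b4⟩ := hp
      omega
    | succ k ih =>
      intro p hp h
      obtain ⟨b1, b2, b3, b4⟩ := hp
      by_cases hp1 : p = (1, 1)
      · subst hp1; rfl
      have hne : ¬(p.1 = 1 ∧ p.2 = 1) := by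
        intro ⟨h1, h2⟩
        exact hp1 (Prod.ext h1 h2)
      by_cases hgt : 1 < p.1
      · have hqbox : (p.1 - 1, p.2) ∈ box n m := by
          rw [mem_box_iff]; simp only []; refine ⟨by omega, by omega, b3, b4⟩
        have hadj : GridZ.Adj p (p.1 - 1, p.2) := mkAdjH (by left; ring) rfl
        have hstep : (GridZ.induce (box n m)).Adj ⟨p, ⟨b1, b2, b3, b4⟩⟩
            ⟨(p.1 - 1, p.2), hqbox⟩ := hadj
        exact hstep.reachable.trans (ih (p.1 - 1, p.2) hqbox (by simp only []; omega))
      · have hgt2 : 1 < p.2 := by omega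
        have hqbox : (p.1, p.2 - 1) ∈ box n m := by
          rw [mem_box_iff]; simp only []; refine ⟨b1, b2, by omega, by omega⟩
        have hadj : GridZ.Adj p (p.1, p.2 - 1) := mkAdjV rfl (by left; ring)
        have hstep : (GridZ.induce (box n m)).Adj ⟨p, ⟨b1, b2, b3, b4⟩⟩
            ⟨(p.1, p.2 - 1), hqbox⟩ := hadj
        exact hstep.reachable.trans (ih (p.1, p.2 - 1) hqbox (by simp only []; omega))
  intro u v
  obtain ⟨p, hp⟩ := u
  obtain ⟨q, hq⟩ := v
  exact (key _ p hp le_rfl).trans (key _ q hq le_rfl).symm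

/-- The box as a finset. -/
noncomputable def boxFinset (n m : ℕ) : Finset (ℤ × ℤ) :=
  Finset.Icc (1 : ℤ) n ×ˢ Finset.Icc (1 : ℤ) m

lemma coe_boxFinset (n m : ℕ) : (boxFinset n m : Set (ℤ × ℤ)) = box n m := by
  ext p
  simp only [boxFinset, Finset.coe_product, Finset.coe_Icc, Set.mem_prod, Set.mem_Icc]
  rw [mem_box_iff]
  tauto

lemma boxFinset_isCDS (n m : ℕ) (hn : 1 ≤ n) (hm : 1 ≤ m) : IsCDS n m (boxFinset n m) := by
  refine ⟨by rw [coe_boxFinset], by rw [coe_boxFinset]; exact box_connected n m hn hm, ?_⟩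
  intro v hv
  exact ⟨v, by rw [← Finset.mem_coe, coe_boxFinset]; exact hv, Or.inl rfl⟩

lemma exists_min_cds (n m : ℕ) (hn : 1 ≤ n) (hm : 1 ≤ m) :
    ∃ S : Finset (ℤ × ℤ), IsCDS n m S ∧ S.card = connDomNum n m := by
  have hne : {k | ∃ S : Finset (ℤ × ℤ), IsCDS n m S ∧ S.card = k}.Nonempty :=
    ⟨(boxFinset n m).card, boxFinset n m, boxFinset_isCDS n m hn hm, rfl⟩
  obtain ⟨S, hS, hcard⟩ := Nat.sInf_mem hne
  exact ⟨S, hS, hcard⟩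

lemma connDomNum_le (n m : ℕ) {S : Finset (ℤ × ℤ)} (hS : IsCDS n m S) :
    connDomNum n m ≤ S.card :=
  Nat.sInf_le ⟨S, hS, rfl⟩

lemma cds_two_le {n m : ℕ} (hn : 3 ≤ n) (hm : 3 ≤ m) {S : Finset (ℤ × ℤ)}
    (h : IsCDS n m S) : 2 ≤ S.card := by
  have hn' : (3 : ℤ) ≤ n := by exact_mod_cast hn
  have hm' : (3 : ℤ) ≤ m := by exact_mod_cast hm
  have h11 : ((1 : ℤ), (1 : ℤ)) ∈ box n m := ⟨by norm_num, by omega, by norm_num, by omega⟩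
  have h33 : ((3 : ℤ), (3 : ℤ)) ∈ box n m := ⟨by norm_num, by omega, by norm_num, by omega⟩
  obtain ⟨u, huS, hu⟩ := h.2.2 (1, 1) h11
  obtain ⟨w, hwS, hw⟩ := h.2.2 (3, 3) h33
  by_contra hlt
  push_neg at hlt
  have huw : u = w := by
    have hle : S.card ≤ 1 := by omega
    exact Finset.card_le_one.mp hle u huS w hwS
  subst huw
  have hu' : |u.1 - 1| + |u.2 - 1| ≤ 1 := by
    rcases hu with rfl | hadj
    · simp
    · rw [gridZ_adj_iff] at hadj
      simp only [] at hadj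
      omega
  have hw' : |u.1 - 3| + |u.2 - 3| ≤ 1 := by
    rcases hw with rfl | hadj
    · simp
    · rw [gridZ_adj_iff] at hadj
      simp only [] at hadj
      omega
  rcases abs_cases (u.1 - 1) with ⟨ha, _⟩ | ⟨ha, _⟩ <;>
    rcases abs_cases (u.2 - 1) with ⟨hb, _⟩ | ⟨hb, _⟩ <;>
    rcases abs_cases (u.1 - 3) with ⟨hc, _⟩ | ⟨hc, _⟩ <;>
    rcases abs_cases (u.2 - 3) with ⟨hd, _⟩ | ⟨hd, _⟩ <;>
    omega

lemma exists_adj_of_connected {S : Finset (ℤ × ℤ)}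
    (hconn : (GridZ.induce (S : Set (ℤ × ℤ))).Connected) {c x : ℤ × ℤ}
    (hc : c ∈ S) (hx : x ∈ S) (hne : c ≠ x) : ∃ y ∈ S, GridZ.Adj c y := by
  obtain ⟨p⟩ := hconn ⟨c, hc⟩ ⟨x, hx⟩
  cases p with
  | nil => exact absurd rfl hne
  | @cons _ v _ h q => exact ⟨v.1, v.2, h⟩

lemma swap_conn {S : Finset (ℤ × ℤ)} {c d : ℤ × ℤ}
    (hc : c ∈ S) (hdc : d ≠ c)
    (hadj : ∀ x ∈ S, GridZ.Adj c x → GridZ.Adj d x)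
    (hhub : ∃ x ∈ S, x ≠ c ∧ GridZ.Adj d x)
    (hconn : (GridZ.induce (S : Set (ℤ × ℤ))).Connected) :
    (GridZ.induce ((insert d (S.erase c) : Finset (ℤ × ℤ)) : Set (ℤ × ℤ))).Connected := by
  set T : Finset (ℤ × ℤ) := insert d (S.erase c) with hT
  have hdT : d ∈ (T : Set (ℤ × ℤ)) := by simp [hT]
  have hmem : ∀ x : ℤ × ℤ, x ∈ S → x ≠ c → x ∈ (T : Set (ℤ × ℤ)) := by
    intro x hx hxc
    simp [hT, Finset.mem_insert, Finset.mem_erase, hxc, hx]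
  classical
  let f : ↥(S : Set (ℤ × ℤ)) → ↥(T : Set (ℤ × ℤ)) := fun x =>
    if h : x.1 = c then ⟨d, hdT⟩ else ⟨x.1, hmem x.1 x.2 h⟩
  have key : ∀ (u v : ↥(S : Set (ℤ × ℤ))), (GridZ.induce (S : Set (ℤ × ℤ))).Walk u v →
      (GridZ.induce (T : Set (ℤ × ℤ))).Reachable (f u) (f v) := by
    intro u v p
    induction p with
    | nil => exact SimpleGraph.Reachable.refl _
    | @cons u v w h _ ih =>
      refine SimpleGraph.Reachable.trans ?_ ih
      have h' : GridZ.Adj u.1 v.1 := h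
      by_cases hu : u.1 = c
      · by_cases hv : v.1 = c
        · rw [hu, hv] at h'
          exact absurd h' GridZ.irrefl
        · have hdv : GridZ.Adj d v.1 := hadj v.1 v.2 (by rw [← hu]; exact h')
          have : (GridZ.induce (T : Set (ℤ × ℤ))).Adj ⟨d, hdT⟩ ⟨v.1, hmem v.1 v.2 hv⟩ := hdv
          simp only [f, dif_pos hu, dif_neg hv]
          exact this.reachable
      · by_cases hv : v.1 = c
        · have hdu : GridZ.Adj d u.1 := hadj u.1 u.2 (by rw [← hv]; exact h'.symm)
          have : (GridZ.induce (T : Set (ℤ × ℤ))).Adj ⟨u.1, hmem u.1 u.2 hu⟩ ⟨d, hdT⟩ :=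
            hdu.symm
          simp only [f, dif_pos hv, dif_neg hu]
          exact this.reachable
        · have : (GridZ.induce (T : Set (ℤ × ℤ))).Adj ⟨u.1, hmem u.1 u.2 hu⟩
              ⟨v.1, hmem v.1 v.2 hv⟩ := h'
          simp only [f, dif_neg hu, dif_neg hv]
          exact this.reachable
  obtain ⟨x, hxS, hxc, hdx⟩ := hhub
  have hxT := hmem x hxS hxc
  have hreach_d : ∀ u : ↥(T : Set (ℤ × ℤ)), (GridZ.induce (T : Set (ℤ × ℤ))).Reachable u ⟨d, hdT⟩ := by
    intro u
    obtain ⟨z, hz⟩ := u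
    have hzT : z ∈ T := hz
    rw [hT, Finset.mem_insert] at hzT
    rcases hzT with rfl | hzT
    · rfl
    · rw [Finset.mem_erase] at hzT
      obtain ⟨hzc, hzS⟩ := hzT
      obtain ⟨p⟩ := hconn ⟨z, hzS⟩ ⟨x, hxS⟩
      have := key ⟨z, hzS⟩ ⟨x, hxS⟩ p
      simp only [f, dif_neg hzc, dif_neg hxc] at this
      refine this.trans ?_
      have : (GridZ.induce (T : Set (ℤ × ℤ))).Adj ⟨x, hxT⟩ ⟨d, hdT⟩ := hdx.symm
      exact this.reachable
  rw [SimpleGraph.connected_iff]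
  exact ⟨fun u v => (hreach_d u).trans (hreach_d v).symm, ⟨⟨d, hdT⟩⟩⟩

lemma fix_corner {n m : ℕ} (hn : 3 ≤ n) (hm : 3 ≤ m)
    {S : Finset (ℤ × ℤ)} (hS : IsCDS n m S) (hcard : S.card = connDomNum n m)
    (c a b d : ℤ × ℤ)
    (hd_box : d ∈ box n m)
    (hdc : d ≠ c)
    (hnbrs : ∀ x ∈ box n m, GridZ.Adj c x → x = a ∨ x = b)
    (hda : GridZ.Adj d a) (hdb : GridZ.Adj d b) :
    ∃ S' : Finset (ℤ × ℤ), IsCDS n m S' ∧ S'.card = connDomNum n m ∧ c ∉ S' ∧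
      S' ⊆ S ∪ {d} := by
  classical
  by_cases hcS : c ∈ S
  swap
  · exact ⟨S, hS, hcard, hcS, Finset.subset_union_left⟩
  obtain ⟨hsub, hconn, hdom⟩ := hS
  have htwo : 2 ≤ S.card := cds_two_le hn hm ⟨hsub, hconn, hdom⟩
  obtain ⟨x0, hx0S, hne0⟩ : ∃ x ∈ S, x ≠ c := by
    by_contra hcon
    push_neg at hcon
    have hsb : S ⊆ {c} := fun y hy => Finset.mem_singleton.mpr (hcon y hy)
    have := Finset.card_le_card hsb
    simp only [Finset.card_singleton] at this
    omega
  obtain ⟨y, hyS, hcy⟩ := exists_adj_of_connected hconn hcS hx0S (Ne.symm hne0)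
  have hyc : y ≠ c := hcy.ne'
  -- adjacency hypotheses for the swap
  have hadjS : ∀ x ∈ S, GridZ.Adj c x → GridZ.Adj d x := by
    intro x hxS hcx
    rcases hnbrs x (hsub hxS) hcx with rfl | rfl
    · exact hda
    · exact hdb
  have hhub : ∃ x ∈ S, x ≠ c ∧ GridZ.Adj d x := ⟨y, hyS, hyc, hadjS y hyS hcy⟩
  set T : Finset (ℤ × ℤ) := insert d (S.erase c) with hT
  have hTconn := swap_conn hcS hdc hadjS hhub hconn
  -- T is a CDS
  have hTsub : (T : Set (ℤ × ℤ)) ⊆ box n m := by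
    intro p hp
    simp only [hT, Finset.coe_insert, Set.mem_insert_iff, Finset.coe_erase,
      Set.mem_diff] at hp
    rcases hp with rfl | ⟨hp, _⟩
    · exact hd_box
    · exact hsub hp
  have hTdom : ∀ v ∈ box n m, ∃ u ∈ T, u = v ∨ GridZ.Adj u v := by
    intro v hv
    obtain ⟨u, huS, hcase⟩ := hdom v hv
    by_cases huc : u = c
    · subst huc
      rcases hcase with rfl | hadj
      · -- v = c : dominated by y
        refine ⟨y, ?_, Or.inr hcy.symm⟩
        simp [hT, Finset.mem_insert, Finset.mem_erase, hyc, hyS]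
      · -- Adj c v : v ∈ {a, b}, dominated by d
        refine ⟨d, by simp [hT], Or.inr ?_⟩
        rcases hnbrs v hv hadj with rfl | rfl
        · exact hda
        · exact hdb
    · exact ⟨u, by simp [hT, Finset.mem_insert, Finset.mem_erase, huc, huS], hcase⟩
  have hTcds : IsCDS n m T := ⟨hTsub, hTconn, hTdom⟩
  -- d ∉ S, else T would be a strictly smaller CDS
  have hdS : d ∉ S := by
    intro hdS
    have hTcard : T.card = S.card - 1 := by
      rw [hT, Finset.insert_eq_self.mpr (Finset.mem_erase.mpr ⟨hdc, hdS⟩)]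
      exact Finset.card_erase_of_mem hcS
    have := connDomNum_le n m hTcds
    omega
  have hTcard : T.card = S.card := by
    rw [hT, Finset.card_insert_of_notMem (fun h => hdS (Finset.mem_of_mem_erase h)),
      Finset.card_erase_of_mem hcS]
    omega
  refine ⟨T, hTcds, by omega, ?_, ?_⟩
  · simp [hT, Finset.mem_insert, Finset.mem_erase, Ne.symm hdc]
  · intro p hp
    rw [hT, Finset.mem_insert] at hp
    rcases hp with rfl | hp
    · exact Finset.mem_union_right _ (Finset.mem_singleton_self p)
    · exact Finset.mem_union_left _ (Finset.mem_of_mem_erase hp)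

/-- For `m, n ≥ 3`, the grid `G_{n,m}` has a minimum connected
dominating set containing none of the four corner vertices. -/
theorem exists_min_cds_avoiding_corners (n m : ℕ) (hn : 3 ≤ n) (hm : 3 ≤ m) :
    ∃ S : Finset (ℤ × ℤ), IsCDS n m S ∧ S.card = connDomNum n m ∧
      ∀ c ∈ corners n m, c ∉ S := by
  have hn' : (3 : ℤ) ≤ n := by exact_mod_cast hn
  have hm' : (3 : ℤ) ≤ m := by exact_mod_cast hm
  obtain ⟨S0, hS0, hcard0⟩ := exists_min_cds n m (by omega) (by omega)
  -- corner (1,1), replacement (2,2)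
  obtain ⟨S1, h1cds, h1card, h1c, h1sub⟩ :=
    fix_corner hn hm hS0 hcard0 (1, 1) (1, 2) (2, 1) (2, 2)
      ⟨by norm_num, by omega, by norm_num, by omega⟩
      (by simp [Prod.ext_iff])
      (by
        intro x hx h
        obtain ⟨b1, b2, b3, b4⟩ := hx
        have hc := adj_cases h
        simp only [] at hc
        have : x.1 = 1 ∧ x.2 = 2 ∨ x.1 = 2 ∧ x.2 = 1 := by omega
        rcases this with ⟨h1, h2⟩ | ⟨h1, h2⟩
        · exact Or.inl (Prod.ext h1 h2)
        · exact Or.inr (Prod.ext h1 h2))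
      (mkAdjH (Or.inl (by norm_num)) (by norm_num))
      (mkAdjV (by norm_num) (Or.inl (by norm_num)))
  -- corner (1,m), replacement (2,m-1)
  obtain ⟨S2, h2cds, h2card, h2c, h2sub⟩ :=
    fix_corner hn hm h1cds h1card (1, (m : ℤ)) (1, (m : ℤ) - 1) (2, (m : ℤ)) (2, (m : ℤ) - 1)
      ⟨by norm_num, by omega, by omega, by omega⟩
      (by simp [Prod.ext_iff])
      (by
        intro x hx h
        obtain ⟨b1, b2, b3, b4⟩ := hx
        have hc := adj_cases h
        simp only [] at hc
        have : x.1 = 1 ∧ x.2 = m - 1 ∨ x.1 = 2 ∧ x.2 = m := by omega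
        rcases this with ⟨h1, h2⟩ | ⟨h1, h2⟩
        · exact Or.inl (Prod.ext h1 h2)
        · exact Or.inr (Prod.ext h1 h2))
      (mkAdjH (Or.inl (by norm_num)) (by norm_num))
      (mkAdjV (by norm_num) (Or.inr (by ring)))
  -- corner (n,1), replacement (n-1,2)
  obtain ⟨S3, h3cds, h3card, h3c, h3sub⟩ :=
    fix_corner hn hm h2cds h2card ((n : ℤ), 1) ((n : ℤ) - 1, 1) ((n : ℤ), 2) ((n : ℤ) - 1, 2)
      ⟨by omega, by omega, by norm_num, by omega⟩
      (by intro h; rw [Prod.ext_iff] at h; omega)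
      (by
        intro x hx h
        obtain ⟨b1, b2, b3, b4⟩ := hx
        have hc := adj_cases h
        simp only [] at hc
        have : x.1 = n - 1 ∧ x.2 = 1 ∨ x.1 = n ∧ x.2 = 2 := by omega
        rcases this with ⟨h1, h2⟩ | ⟨h1, h2⟩
        · exact Or.inl (Prod.ext h1 h2)
        · exact Or.inr (Prod.ext h1 h2))
      (mkAdjV (by norm_num) (Or.inl (by norm_num)))
      (mkAdjH (Or.inr (by ring)) (by norm_num))
  -- corner (n,m), replacement (n-1,m-1)
  obtain ⟨S4, h4cds, h4card, h4c, h4sub⟩ :=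
    fix_corner hn hm h3cds h3card ((n : ℤ), (m : ℤ)) ((n : ℤ) - 1, (m : ℤ))
      ((n : ℤ), (m : ℤ) - 1) ((n : ℤ) - 1, (m : ℤ) - 1)
      ⟨by omega, by omega, by omega, by omega⟩
      (by intro h; rw [Prod.ext_iff] at h; omega)
      (by
        intro x hx h
        obtain ⟨b1, b2, b3, b4⟩ := hx
        have hc := adj_cases h
        simp only [] at hc
        have : x.1 = n - 1 ∧ x.2 = m ∨ x.1 = n ∧ x.2 = m - 1 := by omega
        rcases this with ⟨h1, h2⟩ | ⟨h1, h2⟩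
        · exact Or.inl (Prod.ext h1 h2)
        · exact Or.inr (Prod.ext h1 h2))
      (mkAdjV (by norm_num) (Or.inr (by ring)))
      (mkAdjH (Or.inr (by ring)) (by norm_num))
  refine ⟨S4, h4cds, h4card, ?_⟩
  -- no corner lies in S4
  have h1c4 : ((1 : ℤ), (1 : ℤ)) ∉ S4 := by
    intro h
    rcases Finset.mem_union.mp (h4sub h) with h | h
    rcases Finset.mem_union.mp (h3sub h) with h | h
    rcases Finset.mem_union.mp (h2sub h) with h | h
    · exact h1c h
    · rw [Finset.mem_singleton, Prod.ext_iff] at h; omega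
    · rw [Finset.mem_singleton, Prod.ext_iff] at h; omega
    · rw [Finset.mem_singleton, Prod.ext_iff] at h; omega
  have h2c4 : ((1 : ℤ), (m : ℤ)) ∉ S4 := by
    intro h
    rcases Finset.mem_union.mp (h4sub h) with h | h
    rcases Finset.mem_union.mp (h3sub h) with h | h
    · exact h2c h
    · rw [Finset.mem_singleton, Prod.ext_iff] at h; omega
    · rw [Finset.mem_singleton, Prod.ext_iff] at h; omega
  have h3c4 : ((n : ℤ), (1 : ℤ)) ∉ S4 := by
    intro h
    rcases Finset.mem_union.mp (h4sub h) with h | h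
    · exact h3c h
    · rw [Finset.mem_singleton, Prod.ext_iff] at h; omega
  intro c hc
  rcases hc with rfl | rfl | rfl | rfl
  · exact h1c4
  · exact h2c4
  · exact h3c4
  · exact h4c
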